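/- Let P be an orthogonal projection and U a unitary on a finite-dimensional Hilbert space F, let z₁ be in the open unit disc, and let Ψ(z) = P(I - zU*P^⊥)⁻¹U*P|_{Ran P}. If there is a nonzero w ∈ Ran P with Ψ(z₁)w = 0, then v := (I - z₁U*P^⊥)⁻¹U*Pw is a nonzero vector satisfying P^⊥Uv = z₁v and U*Pv = 0. -/

import Mathlib

open ContinuousLinearMap

set_option maxHeartbeats 1000000 in
set_option synthInstance.maxHeartbeats 400000 in
/-- Passage from the inner-function description to the linear-pencil description in the
case `z₂ = 0`: if `w ∈ Ran P` is nonzero and `Ψ(z₁)w = 0`, then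
`v = (I - z₁U*P^⊥)⁻¹U*Pw` is nonzero and satisfies `P^⊥Uv = z₁v` and `U*Pv = 0`. -/
theorem inner_to_pencil_zero_case {n : ℕ}
    (P U : EuclideanSpace ℂ (Fin n) →L[ℂ] EuclideanSpace ℂ (Fin n))
    (hP : IsSelfAdjoint P) (hP2 : P ∘L P = P)
    (hU1 : adjoint U ∘L U = 1) (hU2 : U ∘L adjoint U = 1)
    (z₁ : ℂ) (hz₁ : ‖z₁‖ < 1)
    (R : EuclideanSpace ℂ (Fin n) →L[ℂ] EuclideanSpace ℂ (Fin n))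
    (hR : R = Ring.inverse ((1 : EuclideanSpace ℂ (Fin n) →L[ℂ] EuclideanSpace ℂ (Fin n))
        - z₁ • (adjoint U ∘L (1 - P))))
    (w : EuclideanSpace ℂ (Fin n)) (hw : w ≠ 0) (hwP : P w = w)
    (hΨ : (P ∘L R ∘L (adjoint U ∘L P)) w = 0)
    (v : EuclideanSpace ℂ (Fin n)) (hv : v = R ((adjoint U) (P w))) :
    v ≠ 0 ∧ ((1 - P) ∘L U) v = z₁ • v ∧ (adjoint U ∘L P) v = 0 := by
  -- U ∘ U* = id pointwise
  have hUUs : ∀ y : EuclideanSpace ℂ (Fin n), U (adjoint U y) = y := by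
    intro y
    have := congrArg (fun T : EuclideanSpace ℂ (Fin n) →L[ℂ] EuclideanSpace ℂ (Fin n) => T y) hU2
    simpa using this
  -- adjoint U is an isometry
  have hUiso : ∀ y : EuclideanSpace ℂ (Fin n), ‖adjoint U y‖ = ‖y‖ := by
    intro y
    have h1 : (inner ℂ (adjoint U y) (adjoint U y) : ℂ) = inner ℂ y y := by
      rw [adjoint_inner_left, hUUs]
    rw [inner_self_eq_norm_sq_to_K, inner_self_eq_norm_sq_to_K] at h1
    have h2 : ‖adjoint U y‖ ^ 2 = ‖y‖ ^ 2 := by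
      exact_mod_cast h1
    nlinarith [norm_nonneg (adjoint U y), norm_nonneg y]
  -- 1 - P is a contraction
  have hQsa : IsSelfAdjoint ((1 : EuclideanSpace ℂ (Fin n) →L[ℂ] EuclideanSpace ℂ (Fin n)) - P) :=
    by
      rw [isSelfAdjoint_iff', map_sub, hP.adjoint_eq]
      congr 1
      exact adjoint_id
  have hQ2 : ((1 : EuclideanSpace ℂ (Fin n) →L[ℂ] EuclideanSpace ℂ (Fin n)) - P)
      ∘L ((1 : EuclideanSpace ℂ (Fin n) →L[ℂ] EuclideanSpace ℂ (Fin n)) - P) = 1 - P := by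
    show ((1 : EuclideanSpace ℂ (Fin n) →L[ℂ] EuclideanSpace ℂ (Fin n)) - P) * (1 - P) = 1 - P
    have hP2' : P * P = P := hP2
    rw [sub_mul, mul_sub, mul_sub, one_mul, mul_one, hP2']
    abel
  have hQle : ∀ x : EuclideanSpace ℂ (Fin n),
      ‖((1 : EuclideanSpace ℂ (Fin n) →L[ℂ] EuclideanSpace ℂ (Fin n)) - P) x‖ ≤ ‖x‖ := by
    intro x
    set Q := (1 : EuclideanSpace ℂ (Fin n) →L[ℂ] EuclideanSpace ℂ (Fin n)) - P with hQ
    have h1 : (inner ℂ (Q x) (Q x) : ℂ) = inner ℂ (Q x) x := by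
      nth_rewrite 2 [← hQsa.adjoint_eq]
      rw [adjoint_inner_right]
      have : Q (Q x) = Q x := by
        have := congrArg
          (fun T : EuclideanSpace ℂ (Fin n) →L[ℂ] EuclideanSpace ℂ (Fin n) => T x) hQ2
        simpa using this
      rw [this]
    rw [inner_self_eq_norm_sq_to_K] at h1
    have h2 : ‖Q x‖ ^ 2 ≤ ‖Q x‖ * ‖x‖ := by
      have h3 := norm_inner_le_norm (𝕜 := ℂ) (Q x) x
      rw [← h1] at h3
      simpa [norm_pow] using h3
    rcases eq_or_lt_of_le (norm_nonneg (Q x)) with h | h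
    · rw [← h]; exact norm_nonneg x
    · nlinarith
  -- norm bound gives invertibility
  have hA : ‖z₁ • (adjoint U ∘L ((1 : EuclideanSpace ℂ (Fin n) →L[ℂ] EuclideanSpace ℂ (Fin n)) - P))‖ < 1 := by
    have hb : ‖adjoint U ∘L ((1 : EuclideanSpace ℂ (Fin n) →L[ℂ] EuclideanSpace ℂ (Fin n)) - P)‖ ≤ 1 := by
      refine opNorm_le_bound _ zero_le_one (fun x => ?_)
      rw [one_mul, comp_apply, hUiso]
      exact hQle x
    calc ‖z₁ • (adjoint U ∘L ((1 : EuclideanSpace ℂ (Fin n) →L[ℂ] EuclideanSpace ℂ (Fin n)) - P))‖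
        ≤ ‖z₁‖ * ‖adjoint U ∘L ((1 : EuclideanSpace ℂ (Fin n) →L[ℂ] EuclideanSpace ℂ (Fin n)) - P)‖ :=
          opNorm_smul_le _ _
      _ ≤ ‖z₁‖ * 1 := mul_le_mul_of_nonneg_left hb (norm_nonneg _)
      _ < 1 := by rwa [mul_one]
  set T : EuclideanSpace ℂ (Fin n) →L[ℂ] EuclideanSpace ℂ (Fin n) :=
    1 - z₁ • (adjoint U ∘L ((1 : EuclideanSpace ℂ (Fin n) →L[ℂ] EuclideanSpace ℂ (Fin n)) - P)) with hT
  have hTu : IsUnit T := isUnit_one_sub_of_norm_lt_one hA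
  have hTR : T * R = 1 := by
    rw [hR]
    exact Ring.mul_inverse_cancel T hTu
  -- P v = 0
  have hPv : P v = 0 := by
    rw [hv]
    simpa using hΨ
  have hQv : ((1 : EuclideanSpace ℂ (Fin n) →L[ℂ] EuclideanSpace ℂ (Fin n)) - P) v = v := by
    simp [hPv]
  -- T v = U* w
  have hTv : T v = adjoint U w := by
    rw [hv, hwP, ← comp_apply]
    have : T ∘L R = 1 := hTR
    rw [this, ContinuousLinearMap.one_apply]
  have hTv' : v - z₁ • adjoint U v = adjoint U w := by
    have h3 : T v = v - z₁ • adjoint U (((1 : EuclideanSpace ℂ (Fin n) →L[ℂ] EuclideanSpace ℂ (Fin n)) - P) v) := by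
      simp [hT]
    rw [h3, hQv] at hTv
    exact hTv
  -- apply U
  have hUv : U v = w + z₁ • v := by
    have h4 := congrArg U hTv'
    rw [map_sub, map_smul, hUUs, hUUs] at h4
    have h5 : U v - z₁ • v = w := h4
    rw [sub_eq_iff_eq_add] at h5
    rw [h5, add_comm]
  refine ⟨?_, ?_, ?_⟩
  · intro hv0
    apply hw
    rw [hv0] at hUv
    simpa using hUv.symm
  · have hQw : ((1 : EuclideanSpace ℂ (Fin n) →L[ℂ] EuclideanSpace ℂ (Fin n)) - P) w = 0 := by
      simp [hwP]
    rw [comp_apply, hUv, map_add, map_smul, hQw, hQv, zero_add]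
  · rw [comp_apply, hPv, map_zero]
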